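/- If λ > 4, then the function g(t) = λ·(t² − sinh(t)²) − 2·(t² − t·sinh(t)·cosh(t)) has a nonzero real root; i.e., there exists t ≠ 0 with g(t) = 0. -/

import Mathlib

open Real Set

private lemma aux_mono {f f' : ℝ → ℝ} (hd : ∀ x, HasDerivAt f (f' x) x)
    (h0 : ∀ x, 0 < x → 0 ≤ f' x) {x : ℝ} (hx : 0 ≤ x) : f 0 ≤ f x := by
  have hm : MonotoneOn f (Ici (0:ℝ)) := by
    apply monotoneOn_of_deriv_nonneg (convex_Ici 0)
      (fun y _ => (hd y).continuousAt.continuousWithinAt)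
      (fun y _ => (hd y).differentiableAt.differentiableWithinAt)
    intro y hy
    rw [interior_Ici] at hy
    rw [(hd y).deriv]
    exact h0 y hy
  exact hm self_mem_Ici hx hx

private lemma L2 {x : ℝ} (hx : 0 ≤ x) : 1 + x^2/2 ≤ Real.cosh x := by
  have h := aux_mono (f := fun x => Real.cosh x - 1 - x^2/2)
    (f' := fun y => Real.sinh y - y)
    (fun y => by
      have := ((Real.hasDerivAt_cosh y).sub_const 1).sub ((hasDerivAt_pow 2 y).div_const 2)
      refine this.congr_deriv ?_
      ring)
    (fun y hy => by
      have := Real.self_le_sinh_iff.2 hy.le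
      linarith) hx
  norm_num [Real.cosh_zero] at h
  linarith

private lemma L3 {x : ℝ} (hx : 0 ≤ x) : x + x^3/6 ≤ Real.sinh x := by
  have h := aux_mono (f := fun x => Real.sinh x - x - x^3/6)
    (f' := fun y => Real.cosh y - 1 - y^2/2)
    (fun y => by
      have := ((Real.hasDerivAt_sinh y).sub (hasDerivAt_id y)).sub
        ((hasDerivAt_pow 3 y).div_const 6)
      refine this.congr_deriv ?_
      ring)
    (fun y hy => by have := L2 hy.le; linarith) hx
  norm_num [Real.sinh_zero] at h
  linarith

private lemma L4 {x : ℝ} (hx : 0 ≤ x) : Real.sinh x ≤ x * Real.cosh x := by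
  have h := aux_mono (f := fun x => x * Real.cosh x - Real.sinh x)
    (f' := fun y => y * Real.sinh y)
    (fun y => by
      have := ((hasDerivAt_id y).mul (Real.hasDerivAt_cosh y)).sub (Real.hasDerivAt_sinh y)
      refine this.congr_deriv ?_
      simp only [id_eq]
      ring)
    (fun y hy => mul_nonneg hy.le (Real.sinh_nonneg_iff.2 hy.le)) hx
  norm_num [Real.sinh_zero, Real.cosh_zero] at h
  linarith

private lemma L5 {x : ℝ} (hx : 0 ≤ x) : Real.cosh x - 1 ≤ x^2/2 * Real.cosh x := by
  have h := aux_mono (f := fun x => x^2/2 * Real.cosh x - Real.cosh x + 1)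
    (f' := fun y => y * Real.cosh y + y^2/2 * Real.sinh y - Real.sinh y)
    (fun y => by
      have := ((((hasDerivAt_pow 2 y).div_const 2).mul (Real.hasDerivAt_cosh y)).sub
        (Real.hasDerivAt_cosh y)).add_const 1
      refine this.congr_deriv ?_
      ring)
    (fun y hy => by
      have h1 := L4 hy.le
      have h2 := Real.sinh_nonneg_iff.2 hy.le
      have h3 : (0:ℝ) ≤ y^2/2 * Real.sinh y := by positivity
      linarith) hx
  norm_num [Real.cosh_zero] at h
  linarith

private lemma L6 {x : ℝ} (hx : 0 ≤ x) : Real.sinh x ≤ x + x^3/6 * Real.cosh x := by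
  have h := aux_mono (f := fun x => x + x^3/6 * Real.cosh x - Real.sinh x)
    (f' := fun y => 1 + y^2/2 * Real.cosh y + y^3/6 * Real.sinh y - Real.cosh y)
    (fun y => by
      have := ((hasDerivAt_id y).add (((hasDerivAt_pow 3 y).div_const 6).mul
        (Real.hasDerivAt_cosh y))).sub (Real.hasDerivAt_sinh y)
      refine this.congr_deriv ?_
      ring)
    (fun y hy => by
      have h1 := L5 hy.le
      have h2 := Real.sinh_nonneg_iff.2 hy.le
      have h3 : (0:ℝ) ≤ y^3/6 * Real.sinh y := by positivity
      linarith) hx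
  norm_num [Real.sinh_zero, Real.cosh_zero] at h
  linarith

private noncomputable def gfun (lam t : ℝ) : ℝ :=
  lam * (t^2 - Real.sinh t ^ 2) - 2 * (t^2 - t * Real.sinh t * Real.cosh t)

theorem stmt_1 (lam : ℝ) (hlam : 4 < lam) :
    ∃ t : ℝ, t ≠ 0 ∧
      lam * (t^2 - Real.sinh t ^ 2) - 2 * (t^2 - t * Real.sinh t * Real.cosh t) = 0 := by
  have hln : (0:ℝ) < lam := by linarith
  have hgc : Continuous (gfun lam) := by unfold gfun; continuity
  obtain ⟨t0, ht0pos, ht0small, ht0c⟩ :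
      ∃ t0 : ℝ, 0 < t0 ∧ t0 < 1 ∧ Real.cosh (2 * t0) < lam / 4 := by
    have hco : ContinuousAt (fun t : ℝ => Real.cosh (2 * t)) 0 := by fun_prop
    have h0 : Real.cosh (2 * 0) < lam / 4 := by
      norm_num [Real.cosh_zero]; linarith
    have hev : ∀ᶠ t in nhds (0:ℝ), Real.cosh (2 * t) < lam / 4 :=
      hco.eventually_lt continuousAt_const h0
    obtain ⟨δ, hδpos, hδ⟩ := Metric.eventually_nhds_iff.mp hev
    have h2 : (0:ℝ) < min (δ/2) (1/2) := by positivity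
    refine ⟨min (δ/2) (1/2), h2, ?_, ?_⟩
    · calc min (δ/2) (1/2) ≤ 1/2 := min_le_right _ _
        _ < 1 := by norm_num
    · apply hδ
      rw [Real.dist_eq, sub_zero, abs_of_pos h2]
      calc min (δ/2) (1/2) ≤ δ/2 := min_le_left _ _
        _ < δ := by linarith
  have hneg : gfun lam t0 < 0 := by
    have h1 : t0^2 + t0^4/3 ≤ Real.sinh t0 ^ 2 := by
      have := L3 ht0pos.le
      nlinarith [pow_nonneg ht0pos.le 3, pow_nonneg ht0pos.le 6]
    have h2 : t0 * Real.sinh t0 * Real.cosh t0 ≤ t0^2 + 2*t0^4/3 * Real.cosh (2*t0) := by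
      have hs : Real.sinh t0 * Real.cosh t0 = Real.sinh (2 * t0) / 2 := by
        rw [Real.sinh_two_mul]; ring
      have h6 := L6 (x := 2 * t0) (by linarith)
      calc t0 * Real.sinh t0 * Real.cosh t0 = t0 * (Real.sinh (2*t0) / 2) := by
            rw [mul_assoc, hs]
        _ ≤ t0 * ((2*t0 + (2*t0)^3/6 * Real.cosh (2*t0)) / 2) := by
            apply mul_le_mul_of_nonneg_left _ ht0pos.le
            linarith
        _ = t0^2 + 2*t0^4/3 * Real.cosh (2*t0) := by ring
    have hbound : gfun lam t0 ≤ t0^4/3 * (4 * Real.cosh (2*t0) - lam) := by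
      simp only [gfun]
      nlinarith [mul_le_mul_of_nonneg_left h1 hln.le]
    have ht4 : (0:ℝ) < t0^4/3 := by positivity
    have hcl : 4 * Real.cosh (2*t0) - lam < 0 := by linarith
    have := mul_neg_of_pos_of_neg ht4 hcl
    linarith
  have hpos : 0 < gfun lam lam := by
    have hs : Real.sinh lam ≤ Real.cosh lam := (Real.sinh_lt_cosh lam).le
    have hsn : 0 < Real.sinh lam := Real.sinh_pos_iff.2 (by linarith)
    simp only [gfun]
    nlinarith [mul_le_mul_of_nonneg_left hs (mul_nonneg hln.le hsn.le),
      mul_pos hln (mul_pos hsn hsn)]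
  have hle : t0 ≤ lam := by linarith
  obtain ⟨c, hc, hgc0⟩ := intermediate_value_Icc hle hgc.continuousOn ⟨hneg.le, hpos.le⟩
  refine ⟨c, by intro h; rw [h] at hc; exact absurd hc.1 (by linarith), ?_⟩
  simpa [gfun] using hgc0
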